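/- Let w_ℓ be a real constant with w_ℓ > −π², let w, f : [0,1] → ℝ be continuous with w(x) ≥ w_ℓ for all x, and let u₁, u₂ : ℝ → ℝ be twice continuously differentiable on [0,1] with u₁(0) = u₁(1) = u₂(0) = u₂(1) = 0, satisfying −u₁″(x) + w(x) u₁(x) = f(x) and −u₂″(x) + w(x) u₂(x) = f(x) for all x ∈ [0,1]. Then u₁(x) = u₂(x) for all x ∈ [0,1]. -/

import Mathlib

open MeasureTheory Real Set

private lemma deriv_sign_right {v : ℝ → ℝ} {d b a : ℝ} (hb : HasDerivAt v d b)
    (hab : b < a) (h0 : v b = 0) (hpos : ∀ x ∈ Set.Ioo b a, 0 < v x) : 0 ≤ d := by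
  have h := (hb.hasDerivWithinAt (s := Set.Ioi b))
  rw [hasDerivWithinAt_iff_tendsto_slope' (by simp)] at h
  have hmem : Set.Ioo b a ∈ nhdsWithin b (Set.Ioi b) :=
    Ioo_mem_nhdsGT_of_mem ⟨le_refl b, hab⟩
  refine ge_of_tendsto h (Filter.eventually_of_mem hmem ?_)
  intro x hx
  have h1 : 0 < x - b := sub_pos.mpr hx.1
  have h2 : 0 < v x := hpos x hx
  have : slope v b x = v x / (x - b) := by rw [slope_def_field, h0, sub_zero]
  rw [this]
  exact div_nonneg h2.le h1.le

private lemma deriv_sign_left {v : ℝ → ℝ} {d b a : ℝ} (ha : HasDerivAt v d a)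
    (hab : b < a) (h0 : v a = 0) (hpos : ∀ x ∈ Set.Ioo b a, 0 < v x) : d ≤ 0 := by
  have h := (ha.hasDerivWithinAt (s := Set.Iio a))
  rw [hasDerivWithinAt_iff_tendsto_slope' (by simp)] at h
  have hmem : Set.Ioo b a ∈ nhdsWithin a (Set.Iio a) :=
    Ioo_mem_nhdsLT_of_mem ⟨hab, le_refl a⟩
  refine le_of_tendsto h (Filter.eventually_of_mem hmem ?_)
  intro x hx
  have hxa : x - a < 0 := sub_neg.mpr hx.2
  have hvx := hpos x hx
  have : slope v a x = v x / (x - a) := by rw [slope_def_field, h0, sub_zero]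
  rw [this]
  exact le_of_lt (div_neg_of_pos_of_neg hvx hxa)

/-- Key Sturm-comparison lemma: a solution of v'' = w v with Dirichlet boundary
conditions and w > -π² is nonpositive on [0,1]. -/
private lemma key_nonpos (w : ℝ → ℝ) (hw : ∀ x ∈ Set.Icc (0:ℝ) 1, -π ^ 2 < w x)
    (v v' v'' : ℝ → ℝ)
    (hv : ∀ x ∈ Set.Icc (0:ℝ) 1, HasDerivAt v (v' x) x)
    (hv' : ∀ x ∈ Set.Icc (0:ℝ) 1, HasDerivAt v' (v'' x) x)
    (hode : ∀ x ∈ Set.Icc (0:ℝ) 1, v'' x = w x * v x)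
    (hv0 : v 0 = 0) (hv1 : v 1 = 0) :
    ∀ x ∈ Set.Icc (0:ℝ) 1, v x ≤ 0 := by
  by_contra hcon
  push_neg at hcon
  obtain ⟨x0, hx0, hx0pos⟩ := hcon
  -- v is continuous on [0,1]
  have hvc : ContinuousOn v (Set.Icc 0 1) :=
    fun x hx => (hv x hx).continuousAt.continuousWithinAt
  have hv'c : ContinuousOn v' (Set.Icc 0 1) :=
    fun x hx => (hv' x hx).continuousAt.continuousWithinAt
  -- x0 is interior
  have hx00 : (0:ℝ) < x0 := by
    rcases lt_or_eq_of_le hx0.1 with h | h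
    · exact h
    · exfalso; rw [← h, hv0] at hx0pos; exact lt_irrefl 0 hx0pos
  have hx01 : x0 < 1 := by
    rcases lt_or_eq_of_le hx0.2 with h | h
    · exact h
    · exfalso; rw [h, hv1] at hx0pos; exact lt_irrefl 0 hx0pos
  -- right zero a
  set S : Set ℝ := Set.Icc x0 1 ∩ v ⁻¹' {0} with hSdef
  have hSsub : S ⊆ Set.Icc 0 1 := fun x hx =>
    ⟨le_trans hx0.1 hx.1.1, hx.1.2⟩
  have hScl : IsClosed S :=
    (hvc.mono (fun x hx => ⟨le_trans hx0.1 hx.1, hx.2⟩)).preimage_isClosed_of_isClosed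
      isClosed_Icc isClosed_singleton
  have hSne : S.Nonempty := ⟨1, ⟨le_of_lt hx01, le_refl 1⟩, hv1⟩
  have hSbdd : BddBelow S := ⟨x0, fun x hx => hx.1.1⟩
  set a := sInf S with ha
  have haS : a ∈ S := hScl.csInf_mem hSne hSbdd
  have hva : v a = 0 := haS.2
  have ha1 : a ≤ 1 := haS.1.2
  have hx0a : x0 < a := by
    rcases lt_or_eq_of_le haS.1.1 with h | h
    · exact h
    · exfalso
      apply hx0pos.ne'
      rw [h]; exact hva
  have hposR : ∀ x ∈ Set.Ico x0 a, 0 < v x := by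
    intro x hx
    by_contra hle
    push_neg at hle
    rcases lt_or_eq_of_le hle with h | h
    · -- IVT: zero between x0 and x
      have hx01' : x0 ≤ x := hx.1
      have hx1 : x ≤ 1 := le_of_lt (lt_of_lt_of_le hx.2 ha1)
      have hsub : Set.Icc x0 x ⊆ Set.Icc 0 1 :=
        fun y hy => ⟨le_trans (le_of_lt hx00) hy.1, le_trans hy.2 hx1⟩
      have := intermediate_value_Icc' hx01' (hvc.mono hsub)
      have h0m : (0:ℝ) ∈ Set.Icc (v x) (v x0) := ⟨le_of_lt h, le_of_lt hx0pos⟩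
      obtain ⟨z, hz, hvz⟩ := this h0m
      have hzS : z ∈ S := ⟨⟨hz.1, le_trans hz.2 hx1⟩, hvz⟩
      have : a ≤ z := csInf_le hSbdd hzS
      linarith [hz.2, hx.2]
    · have hxS : x ∈ S := ⟨⟨hx.1, le_of_lt (lt_of_lt_of_le hx.2 ha1)⟩,
        Set.mem_preimage.mpr (Set.mem_singleton_iff.mpr h)⟩
      have : a ≤ x := csInf_le hSbdd hxS
      linarith [hx.2]
  -- left zero b
  set T : Set ℝ := Set.Icc 0 x0 ∩ v ⁻¹' {0} with hTdef
  have hTcl : IsClosed T :=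
    (hvc.mono (fun x hx => ⟨hx.1, le_trans hx.2 (le_of_lt hx01)⟩)).preimage_isClosed_of_isClosed
      isClosed_Icc isClosed_singleton
  have hTne : T.Nonempty := ⟨0, ⟨le_refl 0, le_of_lt hx00⟩, hv0⟩
  have hTbdd : BddAbove T := ⟨x0, fun x hx => hx.1.2⟩
  set b := sSup T with hb
  have hbT : b ∈ T := hTcl.csSup_mem hTne hTbdd
  have hvb : v b = 0 := hbT.2
  have hb0 : 0 ≤ b := hbT.1.1
  have hbx0 : b < x0 := by
    rcases lt_or_eq_of_le hbT.1.2 with h | h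
    · exact h
    · exfalso
      apply hx0pos.ne'
      rw [← h]; exact hvb
  have hposL : ∀ x ∈ Set.Ioc b x0, 0 < v x := by
    intro x hx
    by_contra hle
    push_neg at hle
    rcases lt_or_eq_of_le hle with h | h
    · have hx01' : x ≤ x0 := hx.2
      have hx1 : 0 ≤ x := le_trans hb0 (le_of_lt hx.1)
      have hsub : Set.Icc x x0 ⊆ Set.Icc 0 1 :=
        fun y hy => ⟨le_trans hx1 hy.1, le_trans hy.2 (le_of_lt hx01)⟩
      have := intermediate_value_Icc hx01' (hvc.mono hsub)
      have h0m : (0:ℝ) ∈ Set.Icc (v x) (v x0) := ⟨le_of_lt h, le_of_lt hx0pos⟩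
      obtain ⟨z, hz, hvz⟩ := this h0m
      have hzT : z ∈ T := ⟨⟨le_trans hx1 hz.1, hz.2⟩, hvz⟩
      have : z ≤ b := le_csSup hTbdd hzT
      linarith [hz.1, hx.1]
    · have hxT : x ∈ T := ⟨⟨le_trans hb0 (le_of_lt hx.1), hx.2⟩,
        Set.mem_preimage.mpr (Set.mem_singleton_iff.mpr h)⟩
      have : x ≤ b := le_csSup hTbdd hxT
      linarith [hx.1]
  have hba : b < a := lt_trans hbx0 hx0a
  have hIccsub : Set.Icc b a ⊆ Set.Icc 0 1 :=
    fun x hx => ⟨le_trans hb0 hx.1, le_trans hx.2 ha1⟩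
  have hpos : ∀ x ∈ Set.Ioo b a, 0 < v x := by
    intro x hx
    rcases le_or_gt x x0 with h | h
    · exact hposL x ⟨hx.1, h⟩
    · exact hposR x ⟨le_of_lt h, hx.2⟩
  -- the Wronskian-type function
  set W : ℝ → ℝ := fun x => v' x * Real.sin (π * x) - v x * (π * Real.cos (π * x)) with hWdef
  have hsin : ∀ x : ℝ, HasDerivAt (fun y => Real.sin (π * y)) (π * Real.cos (π * x)) x := by
    intro x
    have h1 : HasDerivAt (fun y : ℝ => π * y) π x := by
      simpa using (hasDerivAt_id x).const_mul π
    have h2 : HasDerivAt (fun y => Real.sin (π * y)) (Real.cos (π * x) * π) x :=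
      HasDerivAt.comp x (Real.hasDerivAt_sin (π * x)) h1
    convert h2 using 1
    ring
  have hcos : ∀ x : ℝ, HasDerivAt (fun y => π * Real.cos (π * y)) (-(π ^ 2 * Real.sin (π * x))) x := by
    intro x
    have h1 : HasDerivAt (fun y : ℝ => π * y) π x := by
      simpa using (hasDerivAt_id x).const_mul π
    have h2 : HasDerivAt (fun y => Real.cos (π * y)) (-Real.sin (π * x) * π) x :=
      HasDerivAt.comp x (Real.hasDerivAt_cos (π * x)) h1
    have h3 := h2.const_mul π
    refine h3.congr_deriv ?_
    ring
  have hW : ∀ x ∈ Set.Icc (0:ℝ) 1,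
      HasDerivAt W ((w x + π ^ 2) * v x * Real.sin (π * x)) x := by
    intro x hx
    have h1 := ((hv' x hx).mul (hsin x)).sub ((hv x hx).mul (hcos x))
    refine h1.congr_deriv ?_
    rw [hode x hx]
    ring
  have hWc : ContinuousOn W (Set.Icc b a) := by
    apply ContinuousOn.sub
    · exact ((hv'c.mono hIccsub).mul ((Real.continuous_sin.comp
        (continuous_const.mul continuous_id)).continuousOn))
    · exact ((hvc.mono hIccsub).mul ((continuous_const.mul (Real.continuous_cos.comp
        (continuous_const.mul continuous_id))).continuousOn))
  have hWmono : StrictMonoOn W (Set.Icc b a) := by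
    apply strictMonoOn_of_deriv_pos (convex_Icc b a) hWc
    intro x hx
    rw [interior_Icc] at hx
    have hx01 : x ∈ Set.Icc (0:ℝ) 1 := hIccsub ⟨le_of_lt hx.1, le_of_lt hx.2⟩
    rw [(hW x hx01).deriv]
    have h1 : 0 < w x + π ^ 2 := by linarith [hw x hx01]
    have h2 : 0 < v x := hpos x hx
    have hx0' : 0 < x := lt_of_le_of_lt hb0 hx.1
    have h3 : 0 < Real.sin (π * x) := by
      apply Real.sin_pos_of_pos_of_lt_pi
      · positivity
      · nlinarith [lt_of_lt_of_le hx.2 ha1, Real.pi_pos]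
    exact mul_pos (mul_pos h1 h2) h3
  have ha0 : 0 ≤ a := le_trans hb0 (le_of_lt hba)
  have hsinb : 0 ≤ Real.sin (π * b) := by
    apply Real.sin_nonneg_of_nonneg_of_le_pi
    · exact mul_nonneg Real.pi_pos.le hb0
    · nlinarith [le_trans (le_of_lt hba) ha1, Real.pi_pos]
  have hsina : 0 ≤ Real.sin (π * a) := by
    apply Real.sin_nonneg_of_nonneg_of_le_pi
    · exact mul_nonneg Real.pi_pos.le ha0
    · nlinarith [ha1, Real.pi_pos]
  have hvb' : 0 ≤ v' b :=
    deriv_sign_right (hv b (hIccsub ⟨le_refl b, le_of_lt hba⟩)) hba hvb hpos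
  have hva' : v' a ≤ 0 :=
    deriv_sign_left (hv a (hIccsub ⟨le_of_lt hba, le_refl a⟩)) hba hva hpos
  have hWb : 0 ≤ W b := by
    simp only [hWdef, hvb]
    have : 0 ≤ v' b * Real.sin (π * b) := mul_nonneg hvb' hsinb
    linarith
  have hWa : W a ≤ 0 := by
    simp only [hWdef, hva]
    have : v' a * Real.sin (π * a) ≤ 0 := mul_nonpos_of_nonpos_of_nonneg hva' hsina
    linarith
  have := hWmono ⟨le_refl b, le_of_lt hba⟩ ⟨le_of_lt hba, le_refl a⟩ hba
  linarith

theorem uniqueness_classical_solution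
    (wl : ℝ) (hwl : -π ^ 2 < wl)
    (w f : ℝ → ℝ)
    (hwc : ContinuousOn w (Set.Icc 0 1)) (hfc : ContinuousOn f (Set.Icc 0 1))
    (hwb : ∀ x ∈ Set.Icc (0:ℝ) 1, wl ≤ w x)
    (u₁ u₁' u₁'' u₂ u₂' u₂'' : ℝ → ℝ)
    (hu₁ : ∀ x ∈ Set.Icc (0:ℝ) 1, HasDerivAt u₁ (u₁' x) x)
    (hu₁' : ∀ x ∈ Set.Icc (0:ℝ) 1, HasDerivAt u₁' (u₁'' x) x)
    (hu₁''c : ContinuousOn u₁'' (Set.Icc 0 1))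
    (hu₂ : ∀ x ∈ Set.Icc (0:ℝ) 1, HasDerivAt u₂ (u₂' x) x)
    (hu₂' : ∀ x ∈ Set.Icc (0:ℝ) 1, HasDerivAt u₂' (u₂'' x) x)
    (hu₂''c : ContinuousOn u₂'' (Set.Icc 0 1))
    (hu₁0 : u₁ 0 = 0) (hu₁1 : u₁ 1 = 0) (hu₂0 : u₂ 0 = 0) (hu₂1 : u₂ 1 = 0)
    (hpde₁ : ∀ x ∈ Set.Icc (0:ℝ) 1, -u₁'' x + w x * u₁ x = f x)
    (hpde₂ : ∀ x ∈ Set.Icc (0:ℝ) 1, -u₂'' x + w x * u₂ x = f x) :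
    ∀ x ∈ Set.Icc (0:ℝ) 1, u₁ x = u₂ x := by
  have hw : ∀ x ∈ Set.Icc (0:ℝ) 1, -π ^ 2 < w x :=
    fun x hx => lt_of_lt_of_le hwl (hwb x hx)
  set v : ℝ → ℝ := fun x => u₁ x - u₂ x with hvdef
  set v' : ℝ → ℝ := fun x => u₁' x - u₂' x with hv'def
  set v'' : ℝ → ℝ := fun x => u₁'' x - u₂'' x with hv''def
  have hv : ∀ x ∈ Set.Icc (0:ℝ) 1, HasDerivAt v (v' x) x :=
    fun x hx => (hu₁ x hx).sub (hu₂ x hx)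
  have hv' : ∀ x ∈ Set.Icc (0:ℝ) 1, HasDerivAt v' (v'' x) x :=
    fun x hx => (hu₁' x hx).sub (hu₂' x hx)
  have hode : ∀ x ∈ Set.Icc (0:ℝ) 1, v'' x = w x * v x := by
    intro x hx
    have h1 := hpde₁ x hx
    have h2 := hpde₂ x hx
    simp only [hv''def, hvdef]
    nlinarith [h1, h2]
  have hv0 : v 0 = 0 := by simp [hvdef, hu₁0, hu₂0]
  have hv1 : v 1 = 0 := by simp [hvdef, hu₁1, hu₂1]
  have hle := key_nonpos w hw v v' v'' hv hv' hode hv0 hv1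
  have hge := key_nonpos w hw (fun x => -v x) (fun x => -v' x) (fun x => -v'' x)
    (fun x hx => (hv x hx).neg) (fun x hx => (hv' x hx).neg)
    (fun x hx => by simp [hode x hx]) (by simp [hv0]) (by simp [hv1])
  intro x hx
  have h1 := hle x hx
  have h2 := hge x hx
  simp only [hvdef] at h1 h2 ⊢
  linarith
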